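/- (Determinacy of finite turn-based reachability games.) In a finite turn-based game arena with target set F ⊆ S, for every state s ∈ S exactly one of the following holds: (i) Player 1 can force reaching F from s within some number of steps (equivalently, s ∈ Win); or (ii) there exists a set W ⊆ S \ F with s ∈ W such that every s' ∈ W ∩ S₂ has some a ∈ A with T(s',a) ∈ W, and every s' ∈ W ∩ S₁ has T(s',a) ∈ W for every a ∈ A (so Player 2 has a strategy keeping the play inside W, hence outside F, forever). In particular s ∉ Win if and only if such a set W exists. -/

import Mathlib

/-- `CanForce S1 S2 T F k s` : Player 1 can force reaching `F` from `s` within `k` steps. -/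
def CanForce {S A : Type*} (S1 S2 : Set S) (T : S → A → S) (F : Set S) : ℕ → S → Prop
  | 0, s => s ∈ F
  | k + 1, s =>
      s ∈ F ∨ (s ∈ S1 ∧ ∃ a, CanForce S1 S2 T F k (T s a)) ∨
        (s ∈ S2 ∧ ∀ a, CanForce S1 S2 T F k (T s a))

lemma canForce_mono {S A : Type*} (S1 S2 : Set S) (T : S → A → S) (F : Set S) :
    ∀ k j s, k ≤ j → CanForce S1 S2 T F k s → CanForce S1 S2 T F j s := by
  intro k
  induction k with
  | zero =>
    intro j s _ h
    cases j with
    | zero => exact h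
    | succ j => exact Or.inl h
  | succ k ih =>
    intro j s hkj h
    cases j with
    | zero => omega
    | succ j =>
      rcases h with h | ⟨h1, a, ha⟩ | ⟨h2, ha⟩
      · exact Or.inl h
      · exact Or.inr (Or.inl ⟨h1, a, ih j _ (by omega) ha⟩)
      · exact Or.inr (Or.inr ⟨h2, fun a => ih j _ (by omega) (ha a)⟩)

/-- Determinacy of finite turn-based reachability games: for every state `s` exactly one
of the following holds: (i) Player 1 can force reaching `F` from `s` within some number of
steps; or (ii) there is a Player-2 trap `W ⊆ S \ F` containing `s` (every Player-2 state
of `W` has an action staying in `W`, and every Player-1 state of `W` stays in `W` under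
every action). In particular `s ∉ Win` iff such a `W` exists. -/
theorem reachability_determinacy {S A : Type*} [Fintype S] [Nonempty S]
    [Fintype A] [Nonempty A] (S1 S2 : Set S)
    (hpart : S1 ∪ S2 = Set.univ) (hdisj : Disjoint S1 S2)
    (T : S → A → S) (F : Set S) :
    ∀ s : S,
      Xor' (∃ k : ℕ, CanForce S1 S2 T F k s)
        (∃ W : Set S, W ⊆ Fᶜ ∧ s ∈ W ∧
          (∀ s' ∈ W ∩ S2, ∃ a : A, T s' a ∈ W) ∧
          (∀ s' ∈ W ∩ S1, ∀ a : A, T s' a ∈ W)) ∧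
      (¬ (∃ k : ℕ, CanForce S1 S2 T F k s) ↔
        (∃ W : Set S, W ⊆ Fᶜ ∧ s ∈ W ∧
          (∀ s' ∈ W ∩ S2, ∃ a : A, T s' a ∈ W) ∧
          (∀ s' ∈ W ∩ S1, ∀ a : A, T s' a ∈ W))) := by
  classical
  set Win : Set S := {s | ∃ k, CanForce S1 S2 T F k s} with hWin
  -- W exists → not in Win
  have hback : ∀ s : S,
      (∃ W : Set S, W ⊆ Fᶜ ∧ s ∈ W ∧
        (∀ s' ∈ W ∩ S2, ∃ a : A, T s' a ∈ W) ∧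
        (∀ s' ∈ W ∩ S1, ∀ a : A, T s' a ∈ W)) → ¬ (∃ k, CanForce S1 S2 T F k s) := by
    rintro s ⟨W, hWF, hsW, h2, h1⟩ ⟨k, hk⟩
    have key : ∀ k, ∀ s ∈ W, ¬ CanForce S1 S2 T F k s := by
      intro k
      induction k with
      | zero => intro s hs h; exact hWF hs h
      | succ k ih =>
        rintro s hs (h | ⟨hs1, a, ha⟩ | ⟨hs2, ha⟩)
        · exact hWF hs h
        · exact ih _ (h1 s ⟨hs, hs1⟩ a) ha
        · obtain ⟨a, haW⟩ := h2 s ⟨hs, hs2⟩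
          exact ih _ haW (ha a)
    exact key k s hsW hk
  -- not in Win → Winᶜ is a trap
  have hfwd : ∀ s : S, ¬ (∃ k, CanForce S1 S2 T F k s) →
      (∃ W : Set S, W ⊆ Fᶜ ∧ s ∈ W ∧
        (∀ s' ∈ W ∩ S2, ∃ a : A, T s' a ∈ W) ∧
        (∀ s' ∈ W ∩ S1, ∀ a : A, T s' a ∈ W)) := by
    intro s hs
    refine ⟨Winᶜ, ?_, hs, ?_, ?_⟩
    · intro x hx hxF
      exact hx ⟨0, hxF⟩
    · rintro s' ⟨hs', hs2⟩
      by_contra h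
      push_neg at h
      apply hs'
      have : ∀ a : A, ∃ k, CanForce S1 S2 T F k (T s' a) := by
        intro a
        have := h a
        have h' : T s' a ∈ Win := by simpa using this
        exact h'
      choose f hf using this
      have hA : (Finset.univ : Finset A).Nonempty := Finset.univ_nonempty
      set K := Finset.univ.sup f with hK
      refine ⟨K + 1, Or.inr (Or.inr ⟨hs2, fun a => ?_⟩)⟩
      exact canForce_mono S1 S2 T F (f a) K _ (Finset.le_sup (Finset.mem_univ a)) (hf a)
    · rintro s' ⟨hs', hs1⟩ a ha
      obtain ⟨k, hk⟩ := ha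
      exact hs' ⟨k + 1, Or.inr (Or.inl ⟨hs1, a, hk⟩)⟩
  intro s
  constructor
  · by_cases h : ∃ k, CanForce S1 S2 T F k s
    · exact Or.inl ⟨h, fun hW => hback s hW h⟩
    · exact Or.inr ⟨hfwd s h, h⟩
  · exact ⟨hfwd s, hback s⟩
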